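/- Let ℤ[C] be the free ℤ-module on the set C of all cyclic words of F_n, and let π : ℤ[C] → Π_{k≥1} M_k be the ℤ-linear map whose k-th component is the linear extension of π_k. Then the kernel of π equals the ℤ-submodule of ℤ[C] generated by the elements l·[w] − [w^l], where w ranges over nonempty cyclically reduced words and l over positive integers. -/

import Mathlib

open List

/-- A letter of the free group `F_n`: a generator index together with a sign. -/
abbrev Letter (n : ℕ) := Fin n × Bool

/-- The inverse of a letter. -/
def linv {n : ℕ} (a : Letter n) : Letter n := (a.1, !a.2)

@[simp] lemma linv_linv {n : ℕ} (a : Letter n) : linv (linv a) = a := by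
  cases a with
  | mk x b => simp [linv]

/-- The (formal) inverse of a word. -/
def wInv {n : ℕ} (w : List (Letter n)) : List (Letter n) := (w.map linv).reverse

@[simp] lemma wInv_wInv {n : ℕ} (w : List (Letter n)) : wInv (wInv w) = w := by
  simp [wInv, Function.comp_def]

/-- A word is reduced if no two consecutive letters are mutually inverse. -/
def Reduced {n : ℕ} (w : List (Letter n)) : Prop :=
  List.Chain' (fun a b => b ≠ linv a) w

/-- A word is cyclically reduced if it is reduced and its first and last letters
are not mutually inverse. -/
def CyclicallyReduced {n : ℕ} (w : List (Letter n)) : Prop :=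
  Reduced w ∧ ∀ a b, w.head? = some a → w.getLast? = some b → a ≠ linv b

/-- `lpow l m` is the `m`-fold concatenation of the list `l` with itself. -/
def lpow {α : Type*} (l : List α) : ℕ → List α
  | 0 => []
  | m + 1 => l ++ lpow l m

/-- The number of oriented occurrences of `u` in the cyclic word represented by `w`. -/
def orientedOcc {n : ℕ} (u w : List (Letter n)) : ℕ :=
  ((Finset.range w.length).filter (fun i => u <+: lpow (w.rotate i) (u.length + 1))).card

/-- `occ u w` : occurrences of the unoriented word `{u, u⁻¹}` in the cyclic word
represented by `w`. -/
def occ {n : ℕ} (u w : List (Letter n)) : ℕ :=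
  orientedOcc u w + orientedOcc (wInv u) w

lemma occ_wInv {n : ℕ} (u w : List (Letter n)) : occ (wInv u) w = occ u w := by
  simp [occ, wInv_wInv, Nat.add_comm]

/-- Occurrences of `u` as a contiguous factor of `w`. -/
def factOcc {n : ℕ} (u w : List (Letter n)) : ℕ :=
  ((Finset.range (w.length + 1)).filter (fun i => u <+: w.drop i)).card

/-- `occf u w` : occurrences of `{u, u⁻¹}` as a contiguous factor of `w`. -/
def occf {n : ℕ} (u w : List (Letter n)) : ℕ := factOcc u w + factOcc (wInv u) w

/-- Two cyclically reduced words represent the same cyclic word iff one is a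
rotation of the other or of its inverse. -/
def SameCyclicWord {n : ℕ} (v w : List (Letter n)) : Prop :=
  (∃ i, w = v.rotate i) ∨ (∃ i, w = (wInv v).rotate i)

/-- Cyclic reduction: repeatedly delete the first and last letter while they are
mutually inverse. -/
def cyclicReduce {n : ℕ} : List (Letter n) → List (Letter n)
  | [] => []
  | a :: rest =>
    if rest.getLast? = some (linv a) then cyclicReduce rest.dropLast
    else a :: rest
  termination_by w => w.length
  decreasing_by all_goals simp [List.length_dropLast]

/-- Oriented reduced words of length `k`. -/
structure RW (n k : ℕ) where
  val : List (Letter n)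
  red : Reduced val
  len : val.length = k

instance (n k : ℕ) : DecidableEq (RW n k) := fun a b =>
  decidable_of_iff (a.val = b.val)
    ⟨fun h => by cases a; cases b; cases h; rfl, fun h => congrArg RW.val h⟩

/-- Identify a reduced word with its inverse: the quotient is the set `W_k` of
unoriented words of length `k`. -/
instance uwSetoid (n k : ℕ) : Setoid (RW n k) where
  r u v := v.val = u.val ∨ v.val = wInv u.val
  iseqv := by
    refine ⟨fun u => Or.inl rfl, ?_, ?_⟩
    · rintro u v (h | h)
      · exact Or.inl h.symm
      · exact Or.inr (by rw [h, wInv_wInv])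
    · rintro u v w (h1 | h1) (h2 | h2)
      · exact Or.inl (h2.trans h1)
      · exact Or.inr (h2.trans (congrArg wInv h1))
      · exact Or.inr (h2.trans h1)
      · exact Or.inl (by rw [h2, h1, wInv_wInv])

instance (n k : ℕ) : ∀ a b : RW n k, Decidable (a ≈ b) := fun a b =>
  show Decidable (b.val = a.val ∨ b.val = wInv a.val) from inferInstance

/-- `W_k` : unoriented reduced words of length `k`. -/
abbrev UW (n k : ℕ) := Quotient (uwSetoid n k)

def toVec (n k : ℕ) (u : RW n k) : List.Vector (Letter n) k := ⟨u.val, u.len⟩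

lemma toVec_inj (n k : ℕ) : Function.Injective (toVec n k) := by
  intro a b h
  have h' : a.val = b.val := congrArg Subtype.val h
  cases a; cases b; cases h'; rfl

noncomputable instance (n k : ℕ) : Fintype (RW n k) :=
  Fintype.ofInjective _ (toVec_inj n k)

noncomputable example (n k : ℕ) : Fintype (UW n k) := inferInstance
noncomputable example (n k : ℕ) : DecidableEq (UW n k) := inferInstance

/-- `M_k` : the free ℤ-module on `W_k`, realized as functions `W_k → ℤ`. -/
abbrev Mk (n k : ℕ) := UW n k → ℤ

/-- `π_k` of the cyclic word represented by `w` : the vector of occurrence counts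
of unoriented words of length `k`. -/
def pik (n k : ℕ) (w : List (Letter n)) : Mk n k :=
  Quotient.lift (fun u : RW n k => (occ u.val w : ℤ)) (by
    intro a b hab
    have h : occ a.val w = occ b.val w := by
      rcases hab with h | h
      · rw [h]
      · rw [h, occ_wInv]
    show ((occ a.val w : ℕ) : ℤ) = ((occ b.val w : ℕ) : ℤ)
    rw [h])

lemma Reduced.drop' {n : ℕ} {w : List (Letter n)} (h : Reduced w) (m : ℕ) :
    Reduced (w.drop m) :=
  List.IsChain.suffix h (List.drop_suffix m w)

lemma Reduced.dropLast' {n : ℕ} {w : List (Letter n)} (h : Reduced w) :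
    Reduced w.dropLast :=
  List.IsChain.prefix h (List.dropLast_prefix w)

/-- The unoriented `(k-1)`-suffix of an oriented word of length `k`. -/
def sufC {n k : ℕ} (w : RW n k) : UW n (k - 1) :=
  Quotient.mk (uwSetoid n (k - 1)) ⟨w.val.drop 1, w.red.drop' 1, by simp [w.len]⟩

/-- The unoriented `(k-1)`-prefix of an oriented word of length `k`. -/
def preC {n k : ℕ} (w : RW n k) : UW n (k - 1) :=
  Quotient.mk (uwSetoid n (k - 1)) ⟨w.val.dropLast, w.red.dropLast', by simp [w.len]⟩

/-- Matrix of `p←_k` w.r.t. the orientation section `σ`: a basis element `w̄` of `M_k`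
is sent to the sum of the unoriented `(k-1)`-words at its outward-pointing ends. -/
noncomputable def AOut (n k : ℕ) (σ : List (Letter n) → List (Letter n)) :
    Matrix (UW n (k - 1)) (UW n k) ℤ := fun ub wb =>
  ∑ w : RW n k,
    if Quotient.mk (uwSetoid n k) w = wb ∧ σ w.val = w.val then
      ((if sufC w = ub ∧ σ (w.val.drop 1) = w.val.drop 1 then 1 else 0) +
       (if preC w = ub ∧ σ (w.val.dropLast) = wInv (w.val.dropLast) then 1 else 0))
    else 0

/-- Matrix of `p→_k` : inward-pointing ends. -/
noncomputable def AIn (n k : ℕ) (σ : List (Letter n) → List (Letter n)) :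
    Matrix (UW n (k - 1)) (UW n k) ℤ := fun ub wb =>
  ∑ w : RW n k,
    if Quotient.mk (uwSetoid n k) w = wb ∧ σ w.val = w.val then
      ((if sufC w = ub ∧ σ (w.val.drop 1) = wInv (w.val.drop 1) then 1 else 0) +
       (if preC w = ub ∧ σ (w.val.dropLast) = w.val.dropLast then 1 else 0))
    else 0

/-- `p←_k : M_k → M_{k-1}`. -/
noncomputable def pOut (n k : ℕ) (σ : List (Letter n) → List (Letter n)) :
    Mk n k →ₗ[ℤ] Mk n (k - 1) := (AOut n k σ).mulVecLin

/-- `p→_k : M_k → M_{k-1}`. -/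
noncomputable def pIn (n k : ℕ) (σ : List (Letter n) → List (Letter n)) :
    Mk n k →ₗ[ℤ] Mk n (k - 1) := (AIn n k σ).mulVecLin

/-- Nonempty cyclically reduced words: representatives of cyclic words. -/
abbrev CWS (n : ℕ) := {w : List (Letter n) // w ≠ [] ∧ CyclicallyReduced w}

/-- "Represents the same cyclic word". -/
def cwrel (n : ℕ) : CWS n → CWS n → Prop := fun v w => SameCyclicWord v.1 w.1

/-- The set `C` of cyclic words. -/
def CWord (n : ℕ) := Quot (cwrel n)

/-- A representative of a cyclic word. -/
noncomputable def cwOut {n : ℕ} (W : CWord n) : CWS n := (Quot.exists_rep W).choose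

/-- `ℤ[C]` : the free ℤ-module on the set of cyclic words. -/
abbrev ZC (n : ℕ) := CWord n →₀ ℤ

/-- `π : ℤ[C] → Π_{k ≥ 1} M_k`, the linear map whose `k`-th component is the
linear extension of `π_k`. -/
noncomputable def piMap (n : ℕ) : ZC n →ₗ[ℤ] (∀ k : ℕ, Mk n (k + 1)) :=
  Finsupp.lift (∀ k : ℕ, Mk n (k + 1)) ℤ (CWord n)
    (fun W => fun k => pik n (k + 1) (cwOut W).1)

-- ######## new material

@[simp] lemma wInv_length {n : ℕ} (w : List (Letter n)) : (wInv w).length = w.length := by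
  simp [wInv]

@[simp] lemma lpow_length {α : Type*} (w : List α) (m : ℕ) : (lpow w m).length = m * w.length := by
  induction m with
  | zero => simp [lpow]
  | succ m ih => simp [lpow, ih]; ring

lemma lpow_one {α : Type*} (w : List α) : lpow w 1 = w := by simp [lpow]

lemma lpow_add {α : Type*} (w : List α) (a b : ℕ) : lpow w (a + b) = lpow w a ++ lpow w b := by
  induction a with
  | zero => simp [lpow]
  | succ a ih => rw [Nat.succ_add]; simp [lpow, ih]

lemma lpow_lpow {α : Type*} (w : List α) (a b : ℕ) : lpow (lpow w a) b = lpow w (a * b) := by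
  induction b with
  | zero => simp [lpow]
  | succ b ih =>
    rw [lpow, ih, ← lpow_add]
    congr 1
    ring

lemma lpow_ne_nil {α : Type*} {w : List α} (hw : w ≠ []) {m : ℕ} (hm : 0 < m) :
    lpow w m ≠ [] := by
  have : (lpow w m).length ≠ 0 := by
    simp only [lpow_length]
    have := List.length_pos_iff.2 hw
    positivity
  exact fun h => this (by simp [h])

lemma lpow_getElem? {α : Type*} (w : List α) (m j : ℕ) (hj : j < m * w.length) :
    (lpow w m)[j]? = w[j % w.length]? := by
  induction m generalizing j with
  | zero => omega
  | succ m ih =>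
    rw [lpow]
    rcases lt_or_ge j w.length with h | h
    · rw [List.getElem?_append_left h, Nat.mod_eq_of_lt h]
    · have hsm : (m + 1) * w.length = m * w.length + w.length := Nat.succ_mul m w.length
      rw [List.getElem?_append_right h, ih (j - w.length) (by omega)]
      congr 1
      conv_rhs => rw [show j = (j - w.length) + w.length by omega, Nat.add_mod_right]

lemma wInv_append {n : ℕ} (a b : List (Letter n)) : wInv (a ++ b) = wInv b ++ wInv a := by
  simp [wInv]

lemma lpow_comm {α : Type*} (w : List α) (m : ℕ) : w ++ lpow w m = lpow w m ++ w := by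
  have h1 := lpow_add w 1 m
  have h2 := lpow_add w m 1
  rw [lpow_one] at h1 h2
  rw [← h1, ← h2, Nat.add_comm]

lemma wInv_lpow {n : ℕ} (w : List (Letter n)) (m : ℕ) : wInv (lpow w m) = lpow (wInv w) m := by
  induction m with
  | zero => simp [lpow, wInv]
  | succ m ih => rw [lpow, wInv_append, ih, ← lpow_comm, lpow]

lemma head?_lpow {α : Type*} {w : List α} (hw : w ≠ []) {m : ℕ} (hm : 0 < m) :
    (lpow w m).head? = w.head? := by
  obtain ⟨m, rfl⟩ : ∃ m', m = m' + 1 := ⟨m - 1, by omega⟩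
  rw [lpow]
  cases w <;> simp_all

lemma getLast?_lpow {α : Type*} {w : List α} (hw : w ≠ []) {m : ℕ} (hm : 0 < m) :
    (lpow w m).getLast? = w.getLast? := by
  induction m with
  | zero => omega
  | succ m ih =>
    rcases Nat.eq_zero_or_pos m with rfl | hm'
    · simp [lpow]
    · rw [lpow, List.getLast?_append_of_ne_nil _ (lpow_ne_nil hw hm'), ih hm']

-- getc : cyclic access with integer index
def getc {n : ℕ} (w : List (Letter n)) (t : ℤ) : Option (Letter n) :=
  w[((t % (w.length : ℤ)).toNat)]?

lemma Int.emod_nonneg' (t : ℤ) {L : ℕ} (hL : 0 < L) : 0 ≤ t % (L : ℤ) :=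
  Int.emod_nonneg t (by exact_mod_cast hL.ne')

lemma Int.emod_lt' (t : ℤ) {L : ℕ} (hL : 0 < L) : t % (L : ℤ) < L :=
  Int.emod_lt_of_pos t (by exact_mod_cast hL)

lemma dvd_sub_emod_self (L : ℕ) (t : ℤ) : (L : ℤ) ∣ t - t % L :=
  ⟨t / L, by rw [Int.emod_def]; ring⟩

lemma emod_eq_emod_of_dvd {L : ℕ} {t t' : ℤ} (h : (L:ℤ) ∣ t - t') :
    t % (L:ℤ) = t' % (L:ℤ) := by
  have h1 := dvd_sub_emod_self L t
  have h2 := dvd_sub_emod_self L t'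
  have h3 : (L:ℤ) ∣ (t % L - t' % L) := by
    have : t % L - t' % L = (t - t') - (t - t % L) + (t' - t' % L) := by ring
    rw [this]
    exact dvd_add (dvd_sub h h1) h2
  rcases Nat.eq_zero_or_pos L with rfl | hL
  · obtain rfl : t = t' := by
      have : t - t' = 0 := by simpa using h3
      omega
    rfl
  have b1 := Int.emod_nonneg' t hL
  have b2 := Int.emod_lt' t hL
  have b3 := Int.emod_nonneg' t' hL
  have b4 := Int.emod_lt' t' hL
  rcases h3 with ⟨c, hc⟩
  have hgt : (L:ℤ) * c < (L:ℤ) * 1 := by rw [mul_one]; omega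
  have hlt' : (L:ℤ) * (-1) < (L:ℤ) * c := by rw [mul_neg_one]; omega
  have hLpos : (0:ℤ) < L := by exact_mod_cast hL
  have c1 : c < 1 := lt_of_mul_lt_mul_left hgt (le_of_lt hLpos)
  have c2 : -1 < c := lt_of_mul_lt_mul_left hlt' (le_of_lt hLpos)
  obtain rfl : c = 0 := by omega
  rw [mul_zero] at hc
  omega

lemma getc_congr {n : ℕ} (w : List (Letter n)) {t t' : ℤ}
    (h : (w.length : ℤ) ∣ t - t') : getc w t = getc w t' := by
  unfold getc
  rw [emod_eq_emod_of_dvd h]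

lemma getc_period {n : ℕ} (w : List (Letter n)) (t : ℤ) :
    getc w (t + w.length) = getc w t :=
  getc_congr w ⟨1, by ring⟩

lemma nat_eq_toNat_emod {L : ℕ} (hL : 0 < L) (s : ℕ) (x : ℤ) (hs : s < L)
    (h : (L:ℤ) ∣ x - s) : s = (x % (L:ℤ)).toNat := by
  have h1 := Int.emod_nonneg' x hL
  have h2 := Int.emod_lt' x hL
  have h3 : (x % (L:ℤ)) = (s:ℤ) % L := by
    have := emod_eq_emod_of_dvd (L := L) (t := x) (t' := (s:ℤ)) h
    omega
  have h4 : (s:ℤ) % L = s := Int.emod_eq_of_lt (by positivity) (by exact_mod_cast hs)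
  omega

lemma dvd_cast_sub_mod (L s : ℕ) : (L:ℤ) ∣ (s:ℤ) - ((s % L : ℕ):ℤ) := by
  have h : L ∣ s - s % L := Nat.dvd_sub_mod s
  have hle : s % L ≤ s := Nat.mod_le s L
  have hc : ((s - s % L : ℕ) : ℤ) = (s:ℤ) - ((s % L : ℕ):ℤ) := by omega
  rw [← hc]
  exact_mod_cast h

lemma getc_natCast {n : ℕ} (w : List (Letter n)) (hw : w ≠ []) (j : ℕ) :
    getc w (j : ℤ) = w[j % w.length]? := by
  have hL : 0 < w.length := List.length_pos_iff.2 hw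
  unfold getc
  rw [show (((j:ℤ) % ((w.length:ℕ):ℤ)).toNat) = j % w.length from
    (nat_eq_toNat_emod hL _ _ (Nat.mod_lt _ hL) (dvd_cast_sub_mod w.length j)).symm]

lemma getc_eq_getElem? {n : ℕ} (w : List (Letter n)) {t : ℤ} (h0 : 0 ≤ t)
    (h1 : t < w.length) : getc w t = w[t.toNat]? := by
  unfold getc
  rw [Int.emod_eq_of_lt h0 h1]

lemma getc_rotate {n : ℕ} (w : List (Letter n)) (r : ℕ) (t : ℤ) :
    getc (w.rotate r) t = getc w (t + r) := by
  rcases eq_or_ne w [] with rfl | hw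
  · simp [getc]
  have hL : 0 < w.length := List.length_pos_iff.2 hw
  have hlen : (w.rotate r).length = w.length := by simp
  unfold getc
  rw [hlen]
  have hnn := Int.emod_nonneg' t hL
  have hlt := Int.emod_lt' t hL
  have h1 : ((t % (w.length:ℤ)).toNat) < w.length := by omega
  rw [List.getElem?_rotate h1]
  congr 1
  set a := (t % (w.length:ℤ)).toNat with ha
  refine nat_eq_toNat_emod hL _ _ (Nat.mod_lt _ hL) ?_
  have d1 : (w.length:ℤ) ∣ t - a := by
    have := dvd_sub_emod_self w.length t
    have haz : (a:ℤ) = t % w.length := by omega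
    rwa [haz]
  have d2 : (w.length:ℤ) ∣ ((a + r : ℕ) : ℤ) - ((a + r) % w.length : ℕ) :=
    dvd_cast_sub_mod w.length (a + r)
  have : (t + r) - ((a + r) % w.length : ℕ) = (t - a) + (((a + r : ℕ):ℤ) - ((a + r) % w.length : ℕ)) := by
    push_cast; ring
  rw [this]
  exact dvd_add d1 d2

lemma getc_lpow {n : ℕ} (w : List (Letter n)) {l : ℕ} (hl : 0 < l) (t : ℤ) :
    getc (lpow w l) t = getc w t := by
  rcases eq_or_ne w [] with rfl | hw
  · have : lpow ([] : List (Letter n)) l = [] := List.length_eq_zero_iff.mp (by simp)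
    rw [this]
  have hL : 0 < w.length := List.length_pos_iff.2 hw
  have hLL : 0 < l * w.length := by positivity
  unfold getc
  rw [lpow_length]
  have hnn := Int.emod_nonneg' t hLL
  have hlt := Int.emod_lt' t hLL
  have hj : (t % ((l*w.length:ℕ):ℤ)).toNat < l * w.length := by
    push_cast at hlt ⊢; omega
  rw [lpow_getElem? w l _ (by exact_mod_cast hj)]
  congr 1
  set a := (t % ((l * w.length : ℕ):ℤ)).toNat with ha
  refine (nat_eq_toNat_emod hL _ _ (Nat.mod_lt _ hL) ?_)
  have d0 : ((l * w.length : ℕ):ℤ) ∣ t - a := by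
    have := dvd_sub_emod_self (l * w.length) t
    have haz : (a:ℤ) = t % ((l * w.length : ℕ):ℤ) := by
      rw [ha]; exact Int.toNat_of_nonneg (by exact_mod_cast hnn)
    rwa [haz]
  have d1 : (w.length:ℤ) ∣ t - a :=
    dvd_trans ⟨l, by push_cast; ring⟩ d0
  have d2 : (w.length:ℤ) ∣ (a:ℤ) - ((a % w.length : ℕ):ℤ) :=
    dvd_cast_sub_mod w.length a
  have : t - ((a % w.length : ℕ):ℤ) = (t - a) + ((a:ℤ) - ((a % w.length : ℕ):ℤ)) := by ring
  rw [this]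
  exact dvd_add d1 d2

lemma getc_wInv {n : ℕ} (w : List (Letter n)) (t : ℤ) :
    getc (wInv w) t = Option.map linv (getc w (-1 - t)) := by
  rcases eq_or_ne w [] with rfl | hw
  · simp [getc, wInv]
  have hL : 0 < w.length := List.length_pos_iff.2 hw
  unfold getc
  rw [wInv_length]
  have hnn := Int.emod_nonneg' t hL
  have hlt := Int.emod_lt' t hL
  have hs : (t % (w.length:ℤ)).toNat < w.length := by omega
  have hrev : (wInv w)[(t % (w.length:ℤ)).toNat]? = Option.map linv (w[w.length - 1 - (t % (w.length:ℤ)).toNat]?) := by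
    unfold wInv
    rw [List.getElem?_reverse (by simpa using hs), List.getElem?_map]
    simp
  rw [hrev]
  congr 2
  set a := (t % (w.length:ℤ)).toNat with ha
  refine nat_eq_toNat_emod hL _ _ (by omega) ?_
  have d1 : (w.length:ℤ) ∣ t - a := by
    have := dvd_sub_emod_self w.length t
    have haz : (a:ℤ) = t % w.length := by omega
    rwa [haz]
  rcases d1 with ⟨c, hc⟩
  refine ⟨-c - 1, ?_⟩
  have hcast : ((w.length - 1 - a : ℕ) : ℤ) = (w.length:ℤ) - 1 - a := by omega
  rw [hcast]
  linarith

-- MatchesZ : cyclic occurrence at an integer position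
def MatchesZ {n : ℕ} (u w : List (Letter n)) (i : ℤ) : Prop :=
  ∀ j < u.length, u[j]? = getc w (i + j)

instance {n : ℕ} (u w : List (Letter n)) (i : ℤ) : Decidable (MatchesZ u w i) := by
  unfold MatchesZ; infer_instance

lemma matchesZ_congr {n : ℕ} (u w : List (Letter n)) {i i' : ℤ}
    (h : (w.length:ℤ) ∣ i - i') : MatchesZ u w i ↔ MatchesZ u w i' := by
  unfold MatchesZ
  refine forall₂_congr fun j hj => ?_
  rw [getc_congr w (t := i + j) (t' := i' + j) (by simpa using h)]

lemma matchesZ_rotate {n : ℕ} (u w : List (Letter n)) (r : ℕ) (i : ℤ) :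
    MatchesZ u (w.rotate r) i ↔ MatchesZ u w (i + r) := by
  unfold MatchesZ
  refine forall₂_congr fun j hj => ?_
  rw [getc_rotate, show i + j + r = i + r + j by ring]

lemma matchesZ_lpow {n : ℕ} (u w : List (Letter n)) {l : ℕ} (hl : 0 < l) (i : ℤ) :
    MatchesZ u (lpow w l) i ↔ MatchesZ u w i := by
  unfold MatchesZ
  refine forall₂_congr fun j hj => ?_
  rw [getc_lpow w hl]

lemma wInv_getElem? {n : ℕ} (u : List (Letter n)) {j : ℕ} (hj : j < u.length) :
    (wInv u)[j]? = Option.map linv u[u.length - 1 - j]? := by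
  unfold wInv
  rw [List.getElem?_reverse (by simpa using hj), List.getElem?_map]
  simp

@[simp] lemma option_map_linv_linv {n : ℕ} (x : Option (Letter n)) :
    Option.map linv (Option.map linv x) = x := by
  cases x <;> simp

lemma matchesZ_wInv {n : ℕ} (u w : List (Letter n)) (i : ℤ) :
    MatchesZ u (wInv w) i ↔ MatchesZ (wInv u) w (-i - u.length) := by
  rcases eq_or_ne u [] with rfl | hu
  · simp [MatchesZ, wInv]
  have hk : 0 < u.length := List.length_pos_iff.2 hu
  constructor
  · intro h j hj
    rw [wInv_length] at hj
    have h' := h (u.length - 1 - j) (by omega)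
    rw [getc_wInv] at h'
    have hc : ((u.length - 1 - j : ℕ) : ℤ) = (u.length:ℤ) - 1 - j := by omega
    rw [wInv_getElem? u (by omega), h', option_map_linv_linv]
    apply getc_congr
    refine ⟨0, ?_⟩
    rw [hc]
    ring
  · intro h j hj
    have h' := h (u.length - 1 - j) (by rw [wInv_length]; omega)
    rw [wInv_getElem? u (by omega)] at h'
    rw [show u.length - 1 - (u.length - 1 - j) = j by omega] at h'
    have hc : ((u.length - 1 - j : ℕ) : ℤ) = (u.length:ℤ) - 1 - j := by omega
    rw [getc_wInv]
    have h2 : u[j]? = Option.map linv (getc w (-i - ↑u.length + ↑(u.length - 1 - j))) := by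
      rw [← h', option_map_linv_linv]
    rw [h2]
    congr 1
    apply getc_congr
    refine ⟨0, ?_⟩
    rw [hc]
    ring

-- prefix characterization
lemma prefix_iff_forall {n : ℕ} (u x : List (Letter n)) (hle : u.length ≤ x.length) :
    u <+: x ↔ ∀ j < u.length, u[j]? = x[j]? := by
  constructor
  · intro h j hj
    rw [List.getElem?_eq_getElem hj, List.getElem?_eq_getElem (hj.trans_le hle),
      h.getElem hj]
  · intro h
    rw [List.prefix_iff_eq_take]
    refine List.ext_getElem? fun j => ?_
    rcases lt_or_ge j u.length with hj | hj
    · rw [List.getElem?_take, if_pos hj, h j hj]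
    · rw [List.getElem?_eq_none hj, List.getElem?_take, if_neg (by omega)]

lemma mem_occ_iff_matchesZ {n : ℕ} (u w : List (Letter n)) (hw : w ≠ []) {i : ℕ}
    (hi : i < w.length) :
    (u <+: lpow (w.rotate i) (u.length + 1)) ↔ MatchesZ u w (i : ℤ) := by
  have hL : 0 < w.length := List.length_pos_iff.2 hw
  have hxlen : (lpow (w.rotate i) (u.length + 1)).length = (u.length + 1) * w.length := by
    rw [lpow_length]; simp
  have hle : u.length ≤ (lpow (w.rotate i) (u.length + 1)).length := by
    rw [hxlen]
    calc u.length ≤ (u.length + 1) * 1 := by omega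
    _ ≤ (u.length + 1) * w.length := by
        exact Nat.mul_le_mul_left _ hL
  rw [prefix_iff_forall _ _ hle]
  refine forall₂_congr fun j hj => ?_
  have hjx : j < (u.length + 1) * (w.rotate i).length := by
    simp only [List.length_rotate]
    calc j < u.length + 1 := by omega
    _ = (u.length + 1) * 1 := by omega
    _ ≤ (u.length + 1) * w.length := Nat.mul_le_mul_left _ hL
  rw [lpow_getElem? _ _ _ hjx]
  have hjl : j % (w.rotate i).length < w.length := by
    simp only [List.length_rotate]; exact Nat.mod_lt _ hL
  rw [List.getElem?_rotate hjl]
  simp only [List.length_rotate]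
  have key : w[(j % w.length + i) % w.length]? = getc w ((i:ℤ) + j) := by
    rw [show ((i:ℤ) + j) = ((i + j : ℕ) : ℤ) by push_cast; ring, getc_natCast w hw,
      Nat.mod_add_mod, Nat.add_comm j i]
  rw [key]

-- counting: injective self-maps of range L preserve filter cardinality
lemma card_filter_comp (L : ℕ) (f : ℕ → ℕ) (hf : ∀ i < L, f i < L)
    (hinj : ∀ i < L, ∀ j < L, f i = f j → i = j) (P : ℕ → Prop) [DecidablePred P] :
    ((Finset.range L).filter fun i => P (f i)).card = ((Finset.range L).filter P).card := by
  have himg : (Finset.range L).image f = Finset.range L := by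
    apply Finset.eq_of_subset_of_card_le
    · intro x hx
      simp only [Finset.mem_image, Finset.mem_range] at hx ⊢
      obtain ⟨i, hi, rfl⟩ := hx
      exact hf i hi
    · rw [Finset.card_image_of_injOn, Finset.card_range]
      intro i hi j hj
      exact hinj i (Finset.mem_range.1 hi) j (Finset.mem_range.1 hj)
  refine Finset.card_bij (fun i _ => f i) ?_ ?_ ?_
  · intro a ha
    simp only [Finset.mem_filter, Finset.mem_range] at ha ⊢
    exact ⟨hf a ha.1, ha.2⟩
  · intro a ha b hb hab
    simp only [Finset.mem_filter, Finset.mem_range] at ha hb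
    exact hinj a ha.1 b hb.1 hab
  · intro b hb
    simp only [Finset.mem_filter, Finset.mem_range] at hb
    have hmem : b ∈ (Finset.range L).image f := by rw [himg]; exact Finset.mem_range.2 hb.1
    obtain ⟨a, ha, rfl⟩ := Finset.mem_image.1 hmem
    refine ⟨a, ?_, rfl⟩
    simp only [Finset.mem_filter, Finset.mem_range]
    exact ⟨Finset.mem_range.1 ha, hb.2⟩

lemma card_filter_mod (L l : ℕ) (P : ℕ → Prop) [DecidablePred P] :
    ((Finset.range (l * L)).filter fun i => P (i % L)).card
      = l * ((Finset.range L).filter fun i => P (i % L)).card := by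
  induction l with
  | zero => simp
  | succ l ih =>
    have : (l + 1) * L = l * L + L := by ring
    rw [this, Finset.range_add, Finset.filter_union, Finset.card_union_of_disjoint, ih,
      Finset.filter_map, Finset.card_map]
    · have : ((Finset.range L).filter ((fun i => P (i % L)) ∘ (addLeftEmbedding (l * L)))).card
          = ((Finset.range L).filter fun i => P (i % L)).card := by
        congr 1
        apply Finset.filter_congr
        intro x _
        simp only [Function.comp, addLeftEmbedding_apply]
        rw [show (l * L + x) % L = x % L by rw [Nat.add_comm, Nat.add_mul_mod_self_right]]
      rw [this]; ring
    · refine Finset.disjoint_left.2 fun x hx hx' => ?_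
      simp only [Finset.mem_filter, Finset.mem_range, Finset.mem_map,
        addLeftEmbedding_apply] at hx hx'
      obtain ⟨⟨a, ha, rfl⟩, -⟩ := hx'
      omega

lemma orientedOcc_card {n : ℕ} (u w : List (Letter n)) (hw : w ≠ []) :
    orientedOcc u w = ((Finset.range w.length).filter fun i : ℕ => MatchesZ u w (i:ℤ)).card := by
  unfold orientedOcc
  congr 1
  apply Finset.filter_congr
  intro i hi
  exact mem_occ_iff_matchesZ u w hw (Finset.mem_range.1 hi)

lemma orientedOcc_rotate {n : ℕ} (u w : List (Letter n)) (hw : w ≠ []) (r : ℕ) :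
    orientedOcc u (w.rotate r) = orientedOcc u w := by
  have hL : 0 < w.length := List.length_pos_iff.2 hw
  have hw' : w.rotate r ≠ [] := fun h => hw (by simpa using congrArg List.length h)
  rw [orientedOcc_card u _ hw', orientedOcc_card u w hw]
  simp only [List.length_rotate]
  have hpt : ∀ i ∈ Finset.range w.length,
      MatchesZ u (w.rotate r) (i:ℤ) ↔ MatchesZ u w (((i + r) % w.length : ℕ) : ℤ) := by
    intro i _
    rw [matchesZ_rotate]
    refine matchesZ_congr u w ?_
    have := dvd_cast_sub_mod w.length (i + r)
    have hc : ((i:ℤ) + r) = ((i + r : ℕ) : ℤ) := by push_cast; ring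
    rw [hc]
    exact this
  rw [Finset.filter_congr hpt]
  exact card_filter_comp w.length (fun i => (i + r) % w.length)
    (fun i _ => Nat.mod_lt _ hL)
    (fun i hi j hj hij => by
      have h1 : (i + r) % w.length = (j + r) % w.length := hij
      have h2 : i % w.length = j % w.length := Nat.ModEq.add_right_cancel' r h1
      rwa [Nat.mod_eq_of_lt hi, Nat.mod_eq_of_lt hj] at h2)
    (fun i : ℕ => MatchesZ u w (i:ℤ))

lemma orientedOcc_wInv_arg {n : ℕ} (u w : List (Letter n)) (hw : w ≠ []) :
    orientedOcc u (wInv w) = orientedOcc (wInv u) w := by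
  have hL : 0 < w.length := List.length_pos_iff.2 hw
  have hw' : wInv w ≠ [] := fun h => hw (by simpa using congrArg List.length h)
  rw [orientedOcc_card u _ hw', orientedOcc_card (wInv u) w hw]
  rw [wInv_length]
  set k := u.length with hk
  set L := w.length with hLdef
  set A := L * (k + 1) with hA
  have hik : ∀ i, i < L → i + k ≤ A := by
    intro i hi
    have : L * (k+1) = L*k + L := by ring
    have hLk : k ≤ L * k := Nat.le_mul_of_pos_left k hL
    omega
  have hpt : ∀ i ∈ Finset.range L,
      MatchesZ u (wInv w) (i:ℤ) ↔ MatchesZ (wInv u) w (((A - (i + k)) % L : ℕ) : ℤ) := by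
    intro i hi
    rw [matchesZ_wInv]
    refine matchesZ_congr (wInv u) w ?_
    have hile := hik i (Finset.mem_range.1 hi)
    have d1 := dvd_cast_sub_mod L (A - (i + k))
    have hc : ((A - (i + k) : ℕ) : ℤ) = (A:ℤ) - i - k := by omega
    -- goal : L ∣ (-(i:ℤ) - k) - ((A - (i+k)) % L : ℕ)
    have heq : -(i:ℤ) - (u.length:ℤ) - (((A - (i + k)) % L : ℕ) : ℤ)
        = (((A - (i+k) : ℕ) : ℤ) - (((A - (i + k)) % L : ℕ) : ℤ)) + (-(A:ℤ)) := by
      rw [hc, ← hk]; ring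
    rw [heq]
    refine dvd_add d1 ⟨-((k:ℤ)+1), ?_⟩
    rw [hA]
    push_cast
    ring
  rw [Finset.filter_congr hpt]
  refine card_filter_comp L (fun i => (A - (i + k)) % L) (fun i _ => Nat.mod_lt _ hL)
    (fun i hi j hj hij => ?_) (fun i : ℕ => MatchesZ (wInv u) w (i:ℤ))
  have hi' := hik i hi
  have hj' := hik j hj
  rcases le_total i j with hle | hle
  · have h1 : A - (j + k) ≤ A - (i + k) := by omega
    have h2 : (A - (i+k)) - (A - (j+k)) = j - i := by omega
    have hd : L ∣ (A - (i+k)) - (A - (j+k)) := (Nat.modEq_iff_dvd' h1).1 (hij.symm)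
    rw [h2] at hd
    have := Nat.eq_zero_of_dvd_of_lt hd
    omega
  · have h1 : A - (i + k) ≤ A - (j + k) := by omega
    have h2 : (A - (j+k)) - (A - (i+k)) = i - j := by omega
    have hd : L ∣ (A - (j+k)) - (A - (i+k)) := (Nat.modEq_iff_dvd' h1).1 hij
    rw [h2] at hd
    have := Nat.eq_zero_of_dvd_of_lt hd
    omega

lemma orientedOcc_lpow {n : ℕ} (u w : List (Letter n)) (hw : w ≠ []) {l : ℕ} (hl : 0 < l) :
    orientedOcc u (lpow w l) = l * orientedOcc u w := by
  have hL : 0 < w.length := List.length_pos_iff.2 hw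
  have hw' : lpow w l ≠ [] := lpow_ne_nil hw hl
  rw [orientedOcc_card u _ hw', orientedOcc_card u w hw, lpow_length]
  have hpt : ∀ i ∈ Finset.range (l * w.length),
      MatchesZ u (lpow w l) (i:ℤ) ↔ MatchesZ u w (((i % w.length : ℕ)) : ℤ) := by
    intro i _
    rw [matchesZ_lpow u w hl]
    exact matchesZ_congr u w (dvd_cast_sub_mod w.length i)
  rw [Finset.filter_congr hpt, card_filter_mod w.length l (fun m : ℕ => MatchesZ u w (m:ℤ))]
  congr 1
  refine congrArg Finset.card (Finset.filter_congr fun i hi => ?_)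
  rw [Nat.mod_eq_of_lt (Finset.mem_range.1 hi)]

lemma occ_rotate {n : ℕ} (u w : List (Letter n)) (hw : w ≠ []) (r : ℕ) :
    occ u (w.rotate r) = occ u w := by
  unfold occ
  rw [orientedOcc_rotate u w hw r, orientedOcc_rotate (wInv u) w hw r]

lemma occ_wInv_arg {n : ℕ} (u w : List (Letter n)) (hw : w ≠ []) :
    occ u (wInv w) = occ u w := by
  unfold occ
  rw [orientedOcc_wInv_arg u w hw, orientedOcc_wInv_arg (wInv u) w hw, wInv_wInv,
    Nat.add_comm]

lemma occ_lpow {n : ℕ} (u w : List (Letter n)) (hw : w ≠ []) {l : ℕ} (hl : 0 < l) :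
    occ u (lpow w l) = l * occ u w := by
  unfold occ
  rw [orientedOcc_lpow u w hw hl, orientedOcc_lpow (wInv u) w hw hl, Nat.mul_add]

section periodic
variable {α : Type*}

lemma per_nat (f : ℤ → α) (a : ℤ) (h : ∀ t, f (t + a) = f t) :
    ∀ (m : ℕ) (t : ℤ), f (t + m * a) = f t := by
  intro m
  induction m with
  | zero => simp
  | succ m ih =>
    intro t
    have : t + (m + 1 : ℕ) * a = (t + m * a) + a := by push_cast; ring
    rw [this, h, ih]

lemma per_int (f : ℤ → α) (a : ℤ) (h : ∀ t, f (t + a) = f t) :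
    ∀ (m : ℤ) (t : ℤ), f (t + m * a) = f t := by
  intro m t
  rcases le_or_gt 0 m with hm | hm
  · obtain ⟨m', rfl⟩ : ∃ m' : ℕ, (m' : ℤ) = m := ⟨m.toNat, Int.toNat_of_nonneg hm⟩
    exact per_nat f a h m' t
  · obtain ⟨m', hm'⟩ : ∃ m' : ℕ, (m' : ℤ) = -m := ⟨(-m).toNat, Int.toNat_of_nonneg (by omega)⟩
    have := per_nat f a h m' (t + m * a)
    rw [hm'] at this
    have e : t + m * a + -m * a = t := by ring
    rw [e] at this
    exact this.symm

lemma per_emod (f : ℤ → α) (p : ℕ) (hp : 0 < p) (h : ∀ t, f (t + p) = f t)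
    {t t' : ℤ} (hd : (p:ℤ) ∣ t - t') : f t = f t' := by
  obtain ⟨c, hc⟩ := hd
  have := per_int f p h c t'
  rw [show t' + c * p = t by rw [mul_comm]; omega] at this
  exact this

/-- the key periodicity transfer lemma -/
lemma seq_period (S T : ℤ → α) (p q k : ℕ) (hp : 0 < p) (hq : 0 < q)
    (hS : ∀ t, S (t + p) = S t) (hT : ∀ t, T (t + q) = T t)
    (hA : ∀ t : ℤ, 0 ≤ t → t < k → S t = T t) (hk : p * q + p + q ≤ k) :
    (∀ t, S (t + Nat.gcd p q) = S t) ∧ (∀ t, T (t + Nat.gcd p q) = T t) := by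
  set d := Nat.gcd p q with hd
  -- Bezout
  have hbez : (d : ℤ) = p * Nat.gcdA p q + q * Nat.gcdB p q := Nat.gcd_eq_gcd_ab p q
  set x := Nat.gcdB p q with hx
  have hpz : (0:ℤ) < p := by exact_mod_cast hp
  have hqz : (0:ℤ) < q := by exact_mod_cast hq
  set x' : ℕ := (x % (p:ℤ)).toNat with hx'
  have hx'0 : 0 ≤ x % (p:ℤ) := Int.emod_nonneg' x hp
  have hx'lt : x % (p:ℤ) < p := Int.emod_lt' x hp
  have hx'c : (x' : ℤ) = x % (p:ℤ) := Int.toNat_of_nonneg hx'0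
  have hx'ltn : x' < p := by omega
  -- d ≡ x' * q  (mod p)
  have hcong : (p:ℤ) ∣ ((x' * q : ℕ) : ℤ) - (d:ℤ) := by
    have h1 : (p:ℤ) ∣ (x - x') := by
      rw [hx'c]
      exact dvd_sub_emod_self p x
    obtain ⟨c, hc⟩ := h1
    refine ⟨-(Nat.gcdA p q) - c * q, ?_⟩
    have : ((x' * q : ℕ) : ℤ) = (x - p * c) * q := by push_cast; rw [show x - p*c = (x':ℤ) by omega]
    rw [this, hbez]
    ring
  have hSd : ∀ t, S (t + d) = S t := by
    intro t
    set t0 := t % (p:ℤ) with ht0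
    have h0 : 0 ≤ t0 := Int.emod_nonneg' t hp
    have h1 : t0 < p := Int.emod_lt' t hp
    have e1 : S (t + d) = S (t0 + d) :=
      per_emod S p hp hS (by have := dvd_sub_emod_self p t; exact (by
        have : (p:ℤ) ∣ (t - t0) := dvd_sub_emod_self p t
        obtain ⟨c, hc⟩ := this
        exact ⟨c, by omega⟩))
    have e2 : S (t0 + d) = S (t0 + x' * q) :=
      per_emod S p hp hS (by
        obtain ⟨c, hc⟩ := hcong
        exact ⟨-c, by push_cast at hc ⊢; linarith⟩)
    have hbound : t0 + x' * q < k := by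
      have : (x' : ℤ) * q ≤ (p - 1) * q := by
        have : (x':ℤ) ≤ (p:ℤ) - 1 := by omega
        nlinarith
      have hkz : (p:ℤ) * q + p + q ≤ k := by exact_mod_cast hk
      nlinarith
    have e3 : S (t0 + x' * q) = T (t0 + x' * q) :=
      hA _ (by positivity) hbound
    have e4 : T (t0 + x' * q) = T t0 := by
      have := per_nat T q hT x' t0
      rwa [show t0 + (x':ℤ) * q = t0 + x' * q by push_cast; ring] at this
    have e5 : T t0 = S t0 := (hA t0 h0 (by
      have hkz : (p:ℤ) * q + p + q ≤ k := by exact_mod_cast hk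
      nlinarith)).symm
    have e6 : S t0 = S t := per_emod S p hp hS (by
      have : (p:ℤ) ∣ (t - t0) := dvd_sub_emod_self p t
      obtain ⟨c, hc⟩ := this
      exact ⟨-c, by push_cast; linarith⟩)
    rw [e1, e2, e3, e4, e5, e6]
  refine ⟨hSd, ?_⟩
  intro t
  set t0 := t % (q:ℤ) with ht0
  have h0 : 0 ≤ t0 := Int.emod_nonneg' t hq
  have h1 : t0 < q := Int.emod_lt' t hq
  have hkz : (p:ℤ) * q + p + q ≤ k := by exact_mod_cast hk
  have hdp : (d:ℤ) ≤ p := by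
    have := Nat.gcd_le_left (m := p) q hp
    exact_mod_cast this
  have e1 : T (t + d) = T (t0 + d) := per_emod T q hq hT (by
    have : (q:ℤ) ∣ (t - t0) := dvd_sub_emod_self q t
    obtain ⟨c, hc⟩ := this
    exact ⟨c, by omega⟩)
  have e2 : T (t0 + d) = S (t0 + d) := (hA _ (by positivity) (by nlinarith)).symm
  have e3 : S (t0 + d) = S t0 := hSd t0
  have e4 : S t0 = T t0 := hA t0 h0 (by nlinarith)
  have e5 : T t0 = T t := per_emod T q hq hT (by
    have : (q:ℤ) ∣ (t - t0) := dvd_sub_emod_self q t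
    obtain ⟨c, hc⟩ := this
    exact ⟨-c, by push_cast; linarith⟩)
  rw [e1, e2, e3, e4, e5]

end periodic

lemma eq_lpow_of_period {n : ℕ} (w : List (Letter n)) (hw : w ≠ []) (d : ℕ) (hd : 0 < d)
    (hdvd : d ∣ w.length) (hper : ∀ t, getc w (t + d) = getc w t) :
    w = lpow (w.take d) (w.length / d) := by
  have hL : 0 < w.length := List.length_pos_iff.2 hw
  have hdL : d ≤ w.length := Nat.le_of_dvd hL hdvd
  have htlen : (w.take d).length = d := by simp [hdL]
  have hlen : (lpow (w.take d) (w.length / d)).length = w.length := by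
    rw [lpow_length, htlen, Nat.div_mul_cancel hdvd]
  refine List.ext_getElem? fun j => ?_
  rcases lt_or_ge j w.length with hj | hj
  · have hjq : j < (w.length / d) * (w.take d).length := by
      rw [htlen, Nat.div_mul_cancel hdvd]; exact hj
    rw [lpow_getElem? _ _ _ hjq, htlen]
    rw [List.getElem?_take, if_pos (Nat.mod_lt _ hd)]
    have h1 : w[j % d]? = getc w ((j % d : ℕ) : ℤ) := by
      rw [getc_natCast w hw, Nat.mod_eq_of_lt (lt_of_lt_of_le (Nat.mod_lt _ hd) hdL)]
    have h2 : w[j]? = getc w (j : ℤ) := by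
      rw [getc_natCast w hw, Nat.mod_eq_of_lt hj]
    rw [h1, h2]
    refine (per_emod (getc w) d hd hper ?_).symm
    exact dvd_sub_comm.mp (dvd_cast_sub_mod d j)
  · rw [List.getElem?_eq_none hj, List.getElem?_eq_none (by omega)]

/-- A primitive (non-power) word. -/
def Primitive {n : ℕ} (w : List (Letter n)) : Prop :=
  w ≠ [] ∧ ∀ u m, w = lpow u m → m ≤ 1

lemma getc_lpow_period {n : ℕ} (u : List (Letter n)) (m : ℕ) (hm : 0 < m) (t : ℤ) :
    getc (lpow u m) (t + u.length) = getc (lpow u m) t := by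
  rw [getc_lpow u hm, getc_lpow u hm, getc_period]

lemma primitive_iff {n : ℕ} (w : List (Letter n)) (hw : w ≠ []) :
    Primitive w ↔ ∀ d, 0 < d → d ∣ w.length →
      (∀ t, getc w (t + d) = getc w t) → d = w.length := by
  have hL : 0 < w.length := List.length_pos_iff.2 hw
  constructor
  · rintro ⟨-, hprim⟩ d hd hdvd hper
    have := eq_lpow_of_period w hw d hd hdvd hper
    have hq : w.length / d ≤ 1 := hprim _ _ this
    have hd2 : w.length / d * d = w.length := Nat.div_mul_cancel hdvd
    set e := w.length / d with he
    have hne : e ≠ 0 := by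
      intro h0
      rw [h0, zero_mul] at hd2
      omega
    have h1 : e = 1 := Nat.le_antisymm hq (Nat.one_le_iff_ne_zero.2 hne)
    rw [h1, one_mul] at hd2
    exact hd2
  · intro h
    refine ⟨hw, fun u m hum => ?_⟩
    by_contra hm
    push_neg at hm
    have hm2 : 2 ≤ m := by omega
    have hu : u ≠ [] := by
      rintro rfl
      have : lpow ([] : List (Letter n)) m = [] := List.length_eq_zero_iff.mp (by simp)
      rw [hum, this] at hw
      exact hw rfl
    have hul : 0 < u.length := List.length_pos_iff.2 hu
    have hdvd : u.length ∣ w.length := by rw [hum, lpow_length]; exact dvd_mul_left u.length m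
    have hper : ∀ t, getc w (t + u.length) = getc w t := by
      intro t
      rw [hum]
      exact getc_lpow_period u m (by omega) t
    have := h u.length hul hdvd hper
    rw [hum, lpow_length] at this
    nlinarith
lemma exists_primitive_root {n : ℕ} (w : List (Letter n)) (hw : w ≠ []) :
    ∃ u m, Primitive u ∧ 1 ≤ m ∧ w = lpow u m := by
  generalize hN : w.length = N
  induction N using Nat.strong_induction_on generalizing w with
  | _ N ih =>
    by_cases hp : Primitive w
    · exact ⟨w, 1, hp, le_refl 1, (lpow_one w).symm⟩
    · have hex : ∃ u m, w = lpow u m ∧ 2 ≤ m := by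
        unfold Primitive at hp
        push_neg at hp
        obtain ⟨u, m, hum, hm⟩ := hp hw
        exact ⟨u, m, hum, by omega⟩
      obtain ⟨u, m, hum, hm⟩ := hex
      have hu : u ≠ [] := by
        rintro rfl
        have hnil : lpow ([] : List (Letter n)) m = [] := List.length_eq_zero_iff.mp (by simp)
        rw [hum, hnil] at hw
        exact hw rfl
      have hul : 0 < u.length := List.length_pos_iff.2 hu
      have hwlen : w.length = m * u.length := by rw [hum, lpow_length]
      have hlt : u.length < N := by
        have h2 : 2 * u.length ≤ m * u.length := Nat.mul_le_mul_right _ hm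
        omega
      obtain ⟨u0, m0, hprim, hm0, hu0⟩ := ih u.length hlt u hu rfl
      refine ⟨u0, m0 * m, hprim, Nat.one_le_iff_ne_zero.2 (by positivity), ?_⟩
      rw [hum, hu0, lpow_lpow]

lemma primitive_rotate {n : ℕ} {w : List (Letter n)} (hp : Primitive w) (r : ℕ) :
    Primitive (w.rotate r) := by
  have hw := hp.1
  have hw' : w.rotate r ≠ [] := fun h => hw (by simpa using congrArg List.length h)
  rw [primitive_iff _ hw']
  intro d hd hdvd hper
  simp only [List.length_rotate] at hdvd ⊢
  refine (primitive_iff w hw).1 hp d hd hdvd fun t => ?_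
  have h1 := hper (t - r)
  rw [getc_rotate, getc_rotate] at h1
  rw [show t - (r:ℤ) + d + r = t + d by ring, show t - (r:ℤ) + r = t by ring] at h1
  exact h1

lemma primitive_wInv {n : ℕ} {w : List (Letter n)} (hp : Primitive w) :
    Primitive (wInv w) := by
  have hw := hp.1
  have hw' : wInv w ≠ [] := fun h => hw (by simpa using congrArg List.length h)
  rw [primitive_iff _ hw']
  intro d hd hdvd hper
  rw [wInv_length] at hdvd ⊢
  refine (primitive_iff w hw).1 hp d hd hdvd fun t => ?_
  have h1 := hper (-1 - (t + d))
  rw [getc_wInv, getc_wInv] at h1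
  rw [show -1 - (-1 - (t + (d:ℤ)) + d) = t by ring, show -1 - (-1 - (t + (d:ℤ))) = t + d by ring] at h1
  have := congrArg (Option.map linv) h1
  rw [option_map_linv_linv, option_map_linv_linv] at this
  exact this.symm

-- cyclically reduced words and powers
lemma reduced_lpow {n : ℕ} {w : List (Letter n)} (hcr : CyclicallyReduced w) (m : ℕ) :
    Reduced (lpow w m) := by
  induction m with
  | zero => exact List.isChain_nil
  | succ m ih =>
    rw [lpow]
    unfold Reduced
    simp only [List.Chain', List.isChain_append]
    refine ⟨hcr.1, ih, ?_⟩
    intro x hx y hy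
    rcases Nat.eq_zero_or_pos m with rfl | hm
    · simp [lpow] at hy
    · rcases eq_or_ne w [] with rfl | hw
      · simp at hx
      rw [head?_lpow hw hm] at hy
      exact hcr.2 y x hy hx

lemma cyclicallyReduced_lpow {n : ℕ} {w : List (Letter n)} (hw : w ≠ [])
    (hcr : CyclicallyReduced w) {m : ℕ} (hm : 0 < m) : CyclicallyReduced (lpow w m) := by
  refine ⟨reduced_lpow hcr m, fun a b ha hb => ?_⟩
  rw [head?_lpow hw hm] at ha
  rw [getLast?_lpow hw hm] at hb
  exact hcr.2 a b ha hb

lemma cyclicallyReduced_of_lpow {n : ℕ} {u : List (Letter n)} (hu : u ≠ []) {m : ℕ}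
    (hm : 0 < m) (hcr : CyclicallyReduced (lpow u m)) : CyclicallyReduced u := by
  constructor
  · have hpre : u <+: lpow u m := by
      obtain ⟨m', rfl⟩ : ∃ m', m = m' + 1 := ⟨m - 1, by omega⟩
      rw [lpow]
      exact List.prefix_append u _
    exact List.IsChain.prefix hcr.1 hpre
  · intro a b ha hb
    refine hcr.2 a b ?_ ?_
    · rw [head?_lpow hu hm]; exact ha
    · rw [getLast?_lpow hu hm]; exact hb

-- rotation inverses and the equivalence
lemma rotate_inv {n : ℕ} (x : List (Letter n)) (i : ℕ) : ∃ j, (x.rotate i).rotate j = x := by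
  rcases eq_or_ne x [] with rfl | hx
  · exact ⟨0, by simp⟩
  have hL : 0 < x.length := List.length_pos_iff.2 hx
  refine ⟨x.length - i % x.length, ?_⟩
  rw [List.rotate_rotate]
  have hmod := Nat.div_add_mod i x.length
  have hlt : i % x.length < x.length := Nat.mod_lt _ hL
  have : i + (x.length - i % x.length) = x.length * (i / x.length + 1) := by
    rw [Nat.mul_add, Nat.mul_one]
    omega
  rw [this, List.rotate_length_mul]

lemma wInv_rotate {n : ℕ} (x : List (Letter n)) (i : ℕ) :
    ∃ j, wInv (x.rotate i) = (wInv x).rotate j := by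
  rcases eq_or_ne x [] with rfl | hx
  · exact ⟨0, by simp [wInv]⟩
  have hL : 0 < x.length := List.length_pos_iff.2 hx
  set i0 := i % x.length with hi0
  have hle : i0 ≤ x.length := le_of_lt (Nat.mod_lt _ hL)
  refine ⟨(wInv (x.drop i0)).length, ?_⟩
  have h1 : x.rotate i = x.drop i0 ++ x.take i0 := by
    rw [← List.rotate_mod, ← hi0, List.rotate_eq_drop_append_take hle]
  have h2 : wInv x = wInv (x.drop i0) ++ wInv (x.take i0) := by
    conv_lhs => rw [show x = x.take i0 ++ x.drop i0 by rw [List.take_append_drop]]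
    rw [wInv_append]
  rw [h1, wInv_append, h2, List.rotate_append_length_eq]

lemma scw_refl {n : ℕ} (v : List (Letter n)) : SameCyclicWord v v :=
  Or.inl ⟨0, (List.rotate_zero v).symm⟩

lemma scw_symm {n : ℕ} {v w : List (Letter n)} (h : SameCyclicWord v w) :
    SameCyclicWord w v := by
  rcases h with ⟨i, rfl⟩ | ⟨i, rfl⟩
  · obtain ⟨j, hj⟩ := rotate_inv v i
    exact Or.inl ⟨j, hj.symm⟩
  · obtain ⟨j', hj'⟩ := wInv_rotate (wInv v) i
    rw [wInv_wInv] at hj'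
    obtain ⟨j2, hj2⟩ := rotate_inv v j'
    exact Or.inr ⟨j2, by rw [hj', hj2]⟩

lemma scw_trans {n : ℕ} {u v w : List (Letter n)} (h1 : SameCyclicWord u v)
    (h2 : SameCyclicWord v w) : SameCyclicWord u w := by
  rcases h1 with ⟨i, rfl⟩ | ⟨i, rfl⟩ <;> rcases h2 with ⟨j, rfl⟩ | ⟨j, rfl⟩
  · exact Or.inl ⟨i + j, List.rotate_rotate u i j⟩
  · obtain ⟨j', hj'⟩ := wInv_rotate u i
    rw [hj', List.rotate_rotate]
    exact Or.inr ⟨j' + j, rfl⟩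
  · exact Or.inr ⟨i + j, List.rotate_rotate (wInv u) i j⟩
  · obtain ⟨j', hj'⟩ := wInv_rotate (wInv u) i
    rw [hj', wInv_wInv, List.rotate_rotate]
    exact Or.inl ⟨j' + j, rfl⟩

lemma cwrel_equivalence (n : ℕ) : Equivalence (cwrel n) :=
  ⟨fun v => scw_refl v.1, fun h => scw_symm h, fun h1 h2 => scw_trans h1 h2⟩

lemma cwrel_of_mk_eq {n : ℕ} {v w : CWS n}
    (h : Quot.mk (cwrel n) v = Quot.mk (cwrel n) w) : cwrel n v w :=
  (cwrel_equivalence n).eqvGen_iff.mp (Quot.eq.1 h)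

lemma cwOut_spec {n : ℕ} (W : CWord n) : Quot.mk (cwrel n) (cwOut W) = W :=
  (Quot.exists_rep W).choose_spec

lemma primitive_of_scw {n : ℕ} {v w : List (Letter n)} (h : SameCyclicWord v w)
    (hp : Primitive v) : Primitive w := by
  rcases h with ⟨i, rfl⟩ | ⟨i, rfl⟩
  · exact primitive_rotate hp i
  · exact primitive_rotate (primitive_wInv hp) i

lemma occ_scw {n : ℕ} {v w : List (Letter n)} (hv : v ≠ []) (h : SameCyclicWord v w)
    (u : List (Letter n)) : occ u w = occ u v := by
  rcases h with ⟨i, rfl⟩ | ⟨i, rfl⟩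
  · exact occ_rotate u v hv i
  · have hv' : wInv v ≠ [] := fun hh => hv (by simpa using congrArg List.length hh)
    rw [occ_rotate u (wInv v) hv' i, occ_wInv_arg u v hv]

section separation
variable {n : ℕ}

lemma take_lpow_getElem? (v : List (Letter n)) (hv : v ≠ []) (k' : ℕ) {j : ℕ} (hj : j < k') :
    ((lpow v k').take k')[j]? = getc v (j : ℤ) := by
  have hp : 0 < v.length := List.length_pos_iff.2 hv
  rw [List.getElem?_take, if_pos hj, lpow_getElem? v k' j
    (lt_of_lt_of_le hj (Nat.le_mul_of_pos_right k' hp)), getc_natCast v hv]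

lemma take_lpow_length (v : List (Letter n)) (hv : v ≠ []) (k' : ℕ) :
    ((lpow v k').take k').length = k' := by
  have hp : 0 < v.length := List.length_pos_iff.2 hv
  rw [List.length_take, lpow_length, Nat.min_eq_left (Nat.le_mul_of_pos_right k' hp)]

lemma occ_take_lpow_pos (v : List (Letter n)) (hv : v ≠ []) (k' : ℕ) :
    0 < occ ((lpow v k').take k') v := by
  have hp : 0 < v.length := List.length_pos_iff.2 hv
  have h1 : MatchesZ ((lpow v k').take k') v ((0:ℕ):ℤ) := by
    intro j hj
    rw [take_lpow_length v hv k'] at hj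
    rw [take_lpow_getElem? v hv k' hj]
    exact congrArg (getc v) (by push_cast; ring)
  have h2 : 0 < orientedOcc ((lpow v k').take k') v := by
    rw [orientedOcc_card _ v hv]
    refine Finset.card_pos.2 ⟨0, ?_⟩
    simp only [Finset.mem_filter, Finset.mem_range]
    exact ⟨hp, h1⟩
  unfold occ
  omega

/-- The separation lemma: a long enough cyclic factor of the primitive `v` does not
occur in any primitive `v'` unless they define the same cyclic word. -/
lemma occ_take_lpow_eq_zero (v v' : List (Letter n)) (hv : v ≠ []) (hv' : v' ≠ [])
    (hpv : Primitive v) (hpv' : Primitive v') (k' : ℕ)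
    (hbound : v.length * v'.length + v.length + v'.length ≤ k')
    (hnot : ¬ SameCyclicWord v' v) :
    occ ((lpow v k').take k') v' = 0 := by
  set p := v.length with hp'
  set q := v'.length with hq'
  have hp : 0 < p := List.length_pos_iff.2 hv
  have hq : 0 < q := List.length_pos_iff.2 hv'
  set u := (lpow v k').take k' with hu
  have hulen : u.length = k' := take_lpow_length v hv k'
  have hk1 : 0 < k' := by nlinarith
  by_contra hocc
  have hex : ∃ i : ℕ, i < q ∧ (MatchesZ u v' (i:ℤ) ∨ MatchesZ (wInv u) v' (i:ℤ)) := by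
    unfold occ at hocc
    have : 0 < orientedOcc u v' ∨ 0 < orientedOcc (wInv u) v' := by omega
    rcases this with h | h
    · rw [orientedOcc_card _ _ hv'] at h
      obtain ⟨i, hi⟩ := Finset.card_pos.1 h
      simp only [Finset.mem_filter, Finset.mem_range] at hi
      exact ⟨i, hi.1, Or.inl hi.2⟩
    · rw [orientedOcc_card _ _ hv'] at h
      obtain ⟨i, hi⟩ := Finset.card_pos.1 h
      simp only [Finset.mem_filter, Finset.mem_range] at hi
      exact ⟨i, hi.1, Or.inr hi.2⟩
  obtain ⟨i, hiq, hcase⟩ := hex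
  set d := Nat.gcd p q with hd
  have hd0 : 0 < d := Nat.gcd_pos_of_pos_left q hp
  have hdp : d ∣ p := Nat.gcd_dvd_left p q
  have hdq : d ∣ q := Nat.gcd_dvd_right p q
  have hSper : ∀ t : ℤ, getc v (t + p) = getc v t := fun t => getc_period v t
  have hpk : p ≤ k' := by nlinarith
  have hqk : q ≤ k' := by nlinarith
  rcases hcase with hm | hm
  · -- u occurs in v' : same orientation
    set T : ℤ → Option (Letter n) := fun t => getc v' ((i:ℤ) + t) with hT
    have hTper : ∀ t, T (t + q) = T t := by
      intro t
      show getc v' ((i:ℤ) + (t + q)) = getc v' ((i:ℤ) + t)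
      rw [show (i:ℤ) + (t + q) = ((i:ℤ) + t) + q by ring, getc_period]
    have hA : ∀ t : ℤ, 0 ≤ t → t < k' → getc v t = T t := by
      intro t h0 h1
      have hj : t.toNat < u.length := by rw [hulen]; omega
      have := hm t.toNat hj
      rw [take_lpow_getElem? v hv k' (by omega : t.toNat < k')] at this
      rw [show ((t.toNat : ℕ) : ℤ) = t by omega] at this
      exact this
    obtain ⟨hSd, hTd⟩ := seq_period (getc v) T p q k' hp hq hSper hTper hA hbound
    have hpd : d = p := (primitive_iff v hv).1 hpv d hd0 hdp hSd
    have hv'd : ∀ s : ℤ, getc v' (s + d) = getc v' s := by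
      intro s
      have := hTd (s - i)
      show getc v' (s + d) = getc v' s
      rw [show s - (i:ℤ) + d = (s + d) - i by ring] at this
      simpa [hT, show (i:ℤ) + (s + d - i) = s + d by ring,
        show (i:ℤ) + (s - i) = s by ring] using this
    have hqd : d = q := (primitive_iff v' hv').1 hpv' d hd0 hdq hv'd
    have hpq : p = q := by omega
    refine hnot (Or.inl ⟨i % q, ?_⟩)
    refine List.ext_getElem? fun j => ?_
    rcases lt_or_ge j p with hj | hj
    · have h1 : v[j]? = getc v (j : ℤ) := by
        rw [getc_natCast v hv, Nat.mod_eq_of_lt hj]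
      have h2 : getc v (j:ℤ) = getc v' ((i:ℤ) + j) := hA j (by positivity) (by omega)
      have hjq : j < (v'.rotate (i % q)).length := by simp; omega
      have h3 : (v'.rotate (i % q))[j]? = v'[(j + i % q) % q]? := List.getElem?_rotate (by omega)
      have h4 : v'[(j + i % q) % q]? = getc v' (((j + i % q : ℕ)) : ℤ) := by
        rw [getc_natCast v' hv']
      have h5 : getc v' (((j + i % q : ℕ)) : ℤ) = getc v' ((i:ℤ) + j) := by
        apply getc_congr
        have := dvd_cast_sub_mod q i
        obtain ⟨c, hc⟩ := this
        exact ⟨-c, by push_cast at hc ⊢; linarith⟩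
      rw [h1, h2, h3, h4, h5]
    · rw [List.getElem?_eq_none (by omega), List.getElem?_eq_none (by simp; omega)]
  · -- wInv u occurs in v' : reversed orientation
    set c : ℤ := (i:ℤ) + k' - 1 with hc
    set T : ℤ → Option (Letter n) := fun t => Option.map linv (getc v' (c - t)) with hT
    have hTper : ∀ t, T (t + q) = T t := by
      intro t
      show Option.map linv (getc v' (c - (t + q))) = Option.map linv (getc v' (c - t))
      congr 1
      have h9 := getc_period v' (c - (t + q))
      rw [show c - (t + (q:ℤ)) + q = c - t by ring] at h9
      exact h9.symm
    have hA : ∀ t : ℤ, 0 ≤ t → t < k' → getc v t = T t := by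
      intro t h0 h1
      have hwlen : (wInv u).length = k' := by rw [wInv_length, hulen]
      have hj : k' - 1 - t.toNat < (wInv u).length := by omega
      have h2 := hm (k' - 1 - t.toNat) hj
      rw [wInv_getElem? u (by omega)] at h2
      rw [show u.length - 1 - (k' - 1 - t.toNat) = t.toNat by omega] at h2
      rw [take_lpow_getElem? v hv k' (by omega : t.toNat < k')] at h2
      rw [show ((t.toNat : ℕ) : ℤ) = t by omega] at h2
      -- h2 : Option.map linv (getc v t) = getc v' (i + (k' - 1 - t.toNat))
      have h3 : ((k' - 1 - t.toNat : ℕ) : ℤ) = (k' : ℤ) - 1 - t := by omega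
      rw [h3] at h2
      have h4 := congrArg (Option.map linv) h2
      rw [option_map_linv_linv] at h4
      rw [h4]
      show _ = Option.map linv (getc v' (c - t))
      congr 2
      rw [hc]
      ring
    obtain ⟨hSd, hTd⟩ := seq_period (getc v) T p q k' hp hq hSper hTper hA hbound
    have hpd : d = p := (primitive_iff v hv).1 hpv d hd0 hdp hSd
    have hv'd : ∀ s : ℤ, getc v' (s + d) = getc v' s := by
      intro s
      have h5 := hTd (c - s - d)
      simp only [hT] at h5
      rw [show c - (c - s - d + d) = s by ring, show c - (c - s - d) = s + d by ring] at h5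
      have h6 := congrArg (Option.map linv) h5
      rw [option_map_linv_linv, option_map_linv_linv] at h6
      exact h6.symm
    have hqd : d = q := (primitive_iff v' hv').1 hpv' d hd0 hdq hv'd
    have hpq : p = q := by omega
    set r : ℕ := ((-1 - c) % (q:ℤ)).toNat with hr
    have hr0 : 0 ≤ (-1 - c) % (q:ℤ) := Int.emod_nonneg' _ hq
    have hrlt : (-1 - c) % (q:ℤ) < q := Int.emod_lt' _ hq
    have hrc : (r : ℤ) = (-1 - c) % (q:ℤ) := Int.toNat_of_nonneg hr0
    refine hnot (Or.inr ⟨r, ?_⟩)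
    refine List.ext_getElem? fun j => ?_
    rcases lt_or_ge j p with hj | hj
    · have h1 : v[j]? = getc v (j : ℤ) := by
        rw [getc_natCast v hv, Nat.mod_eq_of_lt hj]
      have h2 : getc v (j:ℤ) = Option.map linv (getc v' (c - j)) := hA j (by positivity) (by omega)
      have hjq : j < (wInv v').length := by rw [wInv_length]; omega
      have h3 : ((wInv v').rotate r)[j]? = (wInv v')[(j + r) % (wInv v').length]? :=
        List.getElem?_rotate hjq
      have h4 : (wInv v')[(j + r) % (wInv v').length]? = getc (wInv v') (((j + r : ℕ)) : ℤ) := by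
        rw [getc_natCast (wInv v') (fun hh => hv' (by simpa using congrArg List.length hh))]
      have h5 : getc (wInv v') (((j + r : ℕ)) : ℤ) = Option.map linv (getc v' (-1 - ((j:ℤ) + r))) := by
        rw [getc_wInv]
        norm_cast
      have h6 : getc v' (-1 - ((j:ℤ) + r)) = getc v' (c - j) := by
        apply getc_congr
        have hdvd : (q:ℤ) ∣ (-1 - c) - r := by
          rw [hrc]
          exact dvd_sub_emod_self q _
        obtain ⟨e, he⟩ := hdvd
        exact ⟨e, by linarith⟩
      rw [h1, h2, h3, h4, h5, h6]
    · rw [List.getElem?_eq_none (by omega), List.getElem?_eq_none (by simp; omega)]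

end separation

section mainproof
variable {n : ℕ}

noncomputable def cwFun (n : ℕ) (v : CWS n) : ∀ k : ℕ, Mk n (k + 1) :=
  fun k => pik n (k + 1) v.1

lemma pik_eq_occ (n k : ℕ) (w : List (Letter n)) (u : RW n k) :
    pik n k w (Quotient.mk (uwSetoid n k) u) = (occ u.val w : ℤ) := rfl

lemma pik_scw {v w : CWS n} (h : cwrel n v w) (k : ℕ) : pik n k w.1 = pik n k v.1 := by
  funext ub
  induction ub using Quotient.ind with
  | _ u => rw [pik_eq_occ, pik_eq_occ, occ_scw v.2.1 h]

lemma cwFun_respects {v w : CWS n} (h : cwrel n v w) : cwFun n v = cwFun n w := by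
  funext k
  exact (pik_scw h (k + 1)).symm

lemma piMap_apply' (n : ℕ) (y : ZC n) :
    piMap n y = y.sum fun W c => c • cwFun n (cwOut W) := by
  rw [piMap, Finsupp.lift_apply]
  rfl

lemma cwFun_mk_out (v : CWS n) : cwFun n (cwOut (Quot.mk (cwrel n) v)) = cwFun n v :=
  cwFun_respects (cwrel_of_mk_eq (cwOut_spec (Quot.mk (cwrel n) v)))

lemma piMap_single (v : CWS n) (c : ℤ) :
    piMap n (Finsupp.single (Quot.mk (cwrel n) v) c) = c • cwFun n v := by
  erw [piMap_apply', Finsupp.sum_single_index (by simp), cwFun_mk_out]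

lemma pik_lpow (n k : ℕ) (w : List (Letter n)) (hw : w ≠ []) {l : ℕ} (hl : 0 < l) :
    pik n k (lpow w l) = (l : ℤ) • pik n k w := by
  funext ub
  induction ub using Quotient.ind with
  | _ u =>
    rw [Pi.smul_apply, pik_eq_occ, pik_eq_occ, occ_lpow u.val w hw hl, smul_eq_mul]
    push_cast
    ring

-- primitive root data
lemma exists_prim_decomp (v : CWS n) :
    ∃ (u : CWS n) (m : ℕ), 1 ≤ m ∧ Primitive u.1 ∧ v.1 = lpow u.1 m := by
  obtain ⟨u, m, hprim, hm, heq⟩ := exists_primitive_root v.1 v.2.1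
  have hu : u ≠ [] := hprim.1
  have hcr : CyclicallyReduced u := cyclicallyReduced_of_lpow hu hm (heq ▸ v.2.2)
  exact ⟨⟨u, hu, hcr⟩, m, hm, hprim, heq⟩

noncomputable def primRoot (v : CWS n) : CWS n := (exists_prim_decomp v).choose

noncomputable def primMul (v : CWS n) : ℕ :=
  (exists_prim_decomp v).choose_spec.choose

lemma primMul_pos (v : CWS n) : 1 ≤ primMul v :=
  (exists_prim_decomp v).choose_spec.choose_spec.1

lemma primRoot_prim (v : CWS n) : Primitive (primRoot v).1 :=
  (exists_prim_decomp v).choose_spec.choose_spec.2.1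

lemma prim_decomp_eq (v : CWS n) : v.1 = lpow (primRoot v).1 (primMul v) :=
  (exists_prim_decomp v).choose_spec.choose_spec.2.2

-- the generating set
def genSet (n : ℕ) : Set (ZC n) :=
  { x : ZC n |
    ∃ (w : List (Letter n)) (hw : w ≠ [] ∧ CyclicallyReduced w)
      (l : ℕ) (_ : 1 ≤ l)
      (hwl : lpow w l ≠ [] ∧ CyclicallyReduced (lpow w l)),
      x = (l : ℤ) • Finsupp.single (Quot.mk (cwrel n) ⟨w, hw⟩) (1 : ℤ)
          - Finsupp.single (Quot.mk (cwrel n) ⟨lpow w l, hwl⟩) (1 : ℤ) }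

lemma gen_mem (W : CWord n) :
    (primMul (cwOut W) : ℤ) • (Finsupp.single (Quot.mk (cwrel n) (primRoot (cwOut W))) (1:ℤ) : ZC n)
      - Finsupp.single W (1:ℤ) ∈ Submodule.span ℤ (genSet n) := by
  apply Submodule.subset_span
  set v := cwOut W with hvdef
  have hwl : lpow (primRoot v).1 (primMul v) ≠ [] ∧
      CyclicallyReduced (lpow (primRoot v).1 (primMul v)) := by
    rw [← prim_decomp_eq v]
    exact v.2
  refine ⟨(primRoot v).1, (primRoot v).2, primMul v, primMul_pos v, hwl, ?_⟩
  have h1 : (⟨(primRoot v).1, (primRoot v).2⟩ : CWS n) = primRoot v := rfl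
  have h2 : (⟨lpow (primRoot v).1 (primMul v), hwl⟩ : CWS n) = v :=
    Subtype.ext (prim_decomp_eq v).symm
  rw [h1, h2, hvdef, cwOut_spec]
  rfl

-- the projection onto primitive classes
noncomputable def Tmap (n : ℕ) : ZC n →ₗ[ℤ] ZC n :=
  Finsupp.lift (ZC n) ℤ (CWord n)
    (fun W => (primMul (cwOut W) : ℤ) •
      (Finsupp.single (Quot.mk (cwrel n) (primRoot (cwOut W))) (1:ℤ) : ZC n))

lemma sub_Tmap_mem (x : ZC n) : x - Tmap n x ∈ Submodule.span ℤ (genSet n) := by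
  induction x using Finsupp.induction_linear with
  | zero => simp
  | add f g hf hg =>
    have : f + g - Tmap n (f + g) = (f - Tmap n f) + (g - Tmap n g) := by
      rw [map_add]; abel
    rw [this]
    exact Submodule.add_mem _ hf hg
  | single W c =>
    have hT : Tmap n (Finsupp.single W c) = c • ((primMul (cwOut W) : ℤ) •
        (Finsupp.single (Quot.mk (cwrel n) (primRoot (cwOut W))) (1:ℤ) : ZC n)) := by
      rw [Tmap, Finsupp.lift_apply, Finsupp.sum_single_index (by simp)]
    have hsingle : Finsupp.single W c = c • Finsupp.single W (1:ℤ) := by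
      rw [Finsupp.smul_single, smul_eq_mul, mul_one]
    have : Finsupp.single W c - Tmap n (Finsupp.single W c)
        = -(c • ((primMul (cwOut W) : ℤ) •
            (Finsupp.single (Quot.mk (cwrel n) (primRoot (cwOut W))) (1:ℤ) : ZC n)
            - Finsupp.single W (1:ℤ))) := by
      rw [hT, smul_sub]
      rw [← hsingle]
      abel
    rw [this]
    exact Submodule.neg_mem _ (Submodule.smul_mem _ c (gen_mem W))

lemma Tmap_support_prim (x : ZC n) (W' : CWord n) (hW' : W' ∈ (Tmap n x).support) :
    Primitive (cwOut W').1 := by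
  classical
  have hTx : Tmap n x = x.sum (fun W c => c • ((primMul (cwOut W) : ℤ) •
      (Finsupp.single (Quot.mk (cwrel n) (primRoot (cwOut W))) (1:ℤ) : ZC n))) := by
    rw [Tmap, Finsupp.lift_apply]
  rw [hTx] at hW'
  have hWb := Finsupp.support_sum hW'
  rw [Finset.mem_biUnion] at hWb
  obtain ⟨W, _, hmem⟩ := hWb
  have h3 := Finsupp.support_smul hmem
  have h3' := Finsupp.support_smul h3
  have h4 := Finsupp.support_single_subset h3'
  have h2 : W' = Quot.mk (cwrel n) (primRoot (cwOut W)) := Finset.mem_singleton.1 h4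
  have hrel : cwrel n (cwOut W') (primRoot (cwOut W)) :=
    cwrel_of_mk_eq (by rw [cwOut_spec, h2])
  exact primitive_of_scw (scw_symm hrel) (primRoot_prim (cwOut W))

-- linear independence of primitive classes
lemma prim_indep (z : ZC n) (hz : ∀ W ∈ z.support, Primitive (cwOut W).1)
    (hker : piMap n z = 0) : z = 0 := by
  by_contra hne
  obtain ⟨W₁, hW₁⟩ := Finsupp.support_nonempty_iff.2 hne
  set B := z.support.sup (fun W => (cwOut W).1.length) with hB
  set K := B * B + 2 * B with hK
  set v₁ := (cwOut W₁).1 with hv₁def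
  have hv₁ : v₁ ≠ [] := (cwOut W₁).2.1
  have hcr₁ : CyclicallyReduced v₁ := (cwOut W₁).2.2
  have hp₁ : 0 < v₁.length := List.length_pos_iff.2 hv₁
  have hlen_le : ∀ W ∈ z.support, (cwOut W).1.length ≤ B :=
    fun W hW => Finset.le_sup (f := fun W => (cwOut W).1.length) hW
  have hB₁ : v₁.length ≤ B := hlen_le W₁ hW₁
  set u := (lpow v₁ (K + 1)).take (K + 1) with hu
  have hulen : u.length = K + 1 := take_lpow_length v₁ hv₁ (K + 1)
  have hured : Reduced u :=
    List.IsChain.prefix (reduced_lpow hcr₁ (K + 1)) (List.take_prefix _ _)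
  set U : RW n (K + 1) := ⟨u, hured, hulen⟩ with hU
  have heval : z.sum (fun W c => c * (occ u (cwOut W).1 : ℤ)) = 0 := by
    have h1 : piMap n z K (Quotient.mk (uwSetoid n (K+1)) U) = 0 := by rw [hker]; rfl
    rw [piMap_apply', Finsupp.sum] at h1
    rw [Finset.sum_apply, Finset.sum_apply] at h1
    rw [Finsupp.sum, ← h1]
    refine Finset.sum_congr rfl fun W _ => ?_
    rw [Pi.smul_apply, Pi.smul_apply, smul_eq_mul]
    rfl
  rw [Finsupp.sum, Finset.sum_eq_single_of_mem W₁ hW₁] at heval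
  · have hoccpos : 0 < occ u v₁ := occ_take_lpow_pos v₁ hv₁ (K + 1)
    have : z W₁ = 0 := by
      have h2 : (occ u v₁ : ℤ) ≠ 0 := by exact_mod_cast hoccpos.ne'
      exact (mul_eq_zero.1 heval).resolve_right h2
    exact (Finsupp.mem_support_iff.1 hW₁) this
  · intro W hW hWne
    have hocc0 : occ u (cwOut W).1 = 0 := by
      refine occ_take_lpow_eq_zero v₁ (cwOut W).1 hv₁ (cwOut W).2.1 (hz W₁ hW₁) (hz W hW)
        (K + 1) ?_ ?_
      · have h1 := hlen_le W hW
        have h2 : v₁.length * (cwOut W).1.length ≤ B * B :=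
          Nat.mul_le_mul hB₁ h1
        omega
      · intro hscw
        have : cwrel n (cwOut W) (cwOut W₁) := hscw
        have := Quot.sound this
        rw [cwOut_spec, cwOut_spec] at this
        exact hWne this
    rw [hocc0]
    ring

end mainproof

lemma span_le_ker (n : ℕ) : Submodule.span ℤ (genSet n) ≤ LinearMap.ker (piMap n) := by
  rw [Submodule.span_le]
  rintro x ⟨w, hw, l, hl, hwl, rfl⟩
  erw [SetLike.mem_coe, LinearMap.mem_ker, map_sub, map_smul, piMap_single, piMap_single,
    one_smul, one_smul]
  funext k
  rw [Pi.sub_apply, Pi.zero_apply, Pi.smul_apply]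
  show (l:ℤ) • pik n (k+1) w - pik n (k+1) (lpow w l) = 0
  rw [pik_lpow n (k+1) w hw.1 (by omega : 0 < l), sub_self]


/-- The kernel of `π : ℤ[C] → Π_{k ≥ 1} M_k` is the submodule of
`ℤ[C]` generated by the elements `l·[w] - [w^l]` for `w` a nonempty cyclically reduced
word and `l ≥ 1`. -/
theorem kernel_of_pi (n : ℕ) :
    LinearMap.ker (piMap n) =
      Submodule.span ℤ
        { x : ZC n |
          ∃ (w : List (Letter n)) (hw : w ≠ [] ∧ CyclicallyReduced w)
            (l : ℕ) (_ : 1 ≤ l)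
            (hwl : lpow w l ≠ [] ∧ CyclicallyReduced (lpow w l)),
            x = (l : ℤ) • Finsupp.single (Quot.mk (cwrel n) ⟨w, hw⟩) (1 : ℤ)
                - Finsupp.single (Quot.mk (cwrel n) ⟨lpow w l, hwl⟩) (1 : ℤ) } := by
  have hset : { x : ZC n |
          ∃ (w : List (Letter n)) (hw : w ≠ [] ∧ CyclicallyReduced w)
            (l : ℕ) (_ : 1 ≤ l)
            (hwl : lpow w l ≠ [] ∧ CyclicallyReduced (lpow w l)),
            x = (l : ℤ) • Finsupp.single (Quot.mk (cwrel n) ⟨w, hw⟩) (1 : ℤ)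
                - Finsupp.single (Quot.mk (cwrel n) ⟨lpow w l, hwl⟩) (1 : ℤ) } = genSet n := rfl
  rw [hset]
  refine le_antisymm ?_ (span_le_ker n)
  intro x hx
  rw [LinearMap.mem_ker] at hx
  have h1 : x - Tmap n x ∈ Submodule.span ℤ (genSet n) := sub_Tmap_mem x
  have h2 : piMap n (Tmap n x) = 0 := by
    have h3 := span_le_ker n h1
    rw [LinearMap.mem_ker, map_sub, hx, zero_sub, neg_eq_zero] at h3
    exact h3
  have h3 : Tmap n x = 0 := prim_indep (Tmap n x) (Tmap_support_prim x) h2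
  have h4 : x = x - Tmap n x := by rw [h3, sub_zero]
  rw [h4]
  exact h1
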